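/- Let G be a profinite group. Then every closed subgroup of G has a closed permutable complement if and only if for every open normal subgroup N of G, the finite quotient G/N is a C-group. -/

import Mathlib

open Pointwise

/-- In a profinite group, any element `x ≠ 1` avoids some open normal subgroup. -/
lemma exists_openNormal_not_mem {G : Type*} [Group G] [TopologicalSpace G] [IsTopologicalGroup G]
    [CompactSpace G] [T2Space G] [TotallyDisconnectedSpace G] {x : G} (hx : x ≠ 1) :
    ∃ N : Subgroup G, N.Normal ∧ IsOpen (N : Set G) ∧ x ∉ N := by
  have h1 : connectedComponent (1 : G) = {1} := connectedComponent_eq_singleton 1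
  have h2 := connectedComponent_eq_iInter_isClopen (1 : G)
  have hxnot : x ∉ ⋂ s : { s : Set G // IsClopen s ∧ (1 : G) ∈ s }, (s : Set G) := by
    rw [← h2, h1]
    simpa using hx
  rw [Set.mem_iInter] at hxnot
  push_neg at hxnot
  obtain ⟨⟨s, hsc, hs1⟩, hxs⟩ := hxnot
  obtain ⟨N, hN⟩ := IsTopologicalGroup.exist_openNormalSubgroup_sub_clopen_nhds_of_one hsc hs1
  exact ⟨N.toOpenSubgroup.toSubgroup, N.isNormal', N.toOpenSubgroup.isOpen,
    fun h => hxs (hN h)⟩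


/-- Zorn's lemma for minimal elements of a set in a preorder. -/
lemma zorn_min_aux {α : Type*} [Preorder α] (S : Set α)
    (ih : ∀ c ⊆ S, IsChain (· ≤ ·) c → ∀ y ∈ c, ∃ lb ∈ S, ∀ z ∈ c, lb ≤ z)
    (x : α) (hx : x ∈ S) :
    ∃ m, m ∈ S ∧ ∀ z ∈ S, z ≤ m → m ≤ z :=
  let ⟨m, _, hm2⟩ := @zorn_le_nonempty₀ αᵒᵈ _ S (fun c cS hc y yc => ih c cS hc.symm y yc) x hx
  ⟨m, hm2.1, fun z hz hzm => hm2.2 hz hzm⟩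

/-- A profinite group `G` has closed permutable complements for all closed subgroups if
and only if `G/N` is a C-group for every open normal subgroup `N` of `G`. -/
theorem stmt7 {G : Type*} [Group G] [TopologicalSpace G] [IsTopologicalGroup G]
    [CompactSpace G] [T2Space G] [TotallyDisconnectedSpace G] :
    (∀ H : Subgroup G, IsClosed (H : Set G) → ∃ K : Subgroup G,
      IsClosed (K : Set G) ∧ (H : Set G) * (K : Set G) = Set.univ ∧ H ⊓ K = ⊥) ↔
    (∀ (N : Subgroup G) [N.Normal], IsOpen (N : Set G) →
      ∀ H : Subgroup (G ⧸ N), ∃ K : Subgroup (G ⧸ N),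
        (H : Set (G ⧸ N)) * (K : Set (G ⧸ N)) = Set.univ ∧ H ⊓ K = ⊥) := by
  constructor
  · -- Forward direction
    intro hC N hNorm hNopen H
    let π : G →* G ⧸ N := QuotientGroup.mk' N
    have hNle : N ≤ H.comap π := by
      intro n hn
      have : π n = 1 := (QuotientGroup.eq_one_iff n).2 hn
      simp only [Subgroup.mem_comap, this, one_mem]
    have hopen : IsOpen ((H.comap π : Subgroup G) : Set G) := Subgroup.isOpen_mono hNle hNopen
    obtain ⟨K, hKcl, hKmul, hKint⟩ := hC (H.comap π) ((H.comap π).isClosed_of_isOpen hopen)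
    refine ⟨K.map π, ?_, ?_⟩
    · ext y
      simp only [Set.mem_univ, iff_true]
      obtain ⟨g, rfl⟩ := QuotientGroup.mk'_surjective N y
      have hg : g ∈ ((H.comap π : Subgroup G) : Set G) * (K : Set G) := by
        rw [hKmul]; trivial
      obtain ⟨h, hh, k, hk, rfl⟩ := hg
      have hπh : π h ∈ (H : Set (G ⧸ N)) := hh
      have hπk : π k ∈ (K.map π : Set (G ⧸ N)) := ⟨k, hk, rfl⟩
      have : π (h * k) = π h * π k := map_mul π h k
      rw [show (QuotientGroup.mk' N) (h * k) = π h * π k from this]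
      exact Set.mul_mem_mul hπh hπk
    · rw [eq_bot_iff]
      rintro y ⟨hyH, hyK⟩
      obtain ⟨k, hk, rfl⟩ := hyK
      have hkc : k ∈ H.comap π := hyH
      have : k ∈ (H.comap π) ⊓ K := ⟨hkc, hk⟩
      rw [hKint, Subgroup.mem_bot] at this
      subst this
      simp
  · -- Backward direction
    intro hfin H hHcl
    set S : Set (Subgroup G) := {K | IsClosed (K : Set G) ∧ (H : Set G) * (K : Set G) = Set.univ}
      with hS
    have hTop : (⊤ : Subgroup G) ∈ S := by
      refine ⟨isClosed_univ, ?_⟩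
      ext g
      simp only [Set.mem_univ, iff_true]
      exact ⟨1, H.one_mem, g, trivial, one_mul g⟩
    -- Zorn's lemma: a minimal closed K with H * K = G exists.
    have hZorn : ∃ K, K ∈ S ∧ ∀ z ∈ S, z ≤ K → K ≤ z := by
      refine zorn_min_aux S ?_ ⊤ hTop
      intro c hcS hchain y hy
      have hcne : c.Nonempty := ⟨y, hy⟩
      refine ⟨sInf c, ⟨?_, ?_⟩, fun z hz => sInf_le hz⟩
      · rw [Subgroup.coe_sInf]
        exact isClosed_biInter fun K hK => (hcS hK).1
      · ext g
        simp only [Set.mem_univ, iff_true]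
        have hHcmp : IsCompact (H : Set G) := hHcl.isCompact
        have hScmp : IsCompact ((fun h => h⁻¹ * g) '' (H : Set G)) :=
          hHcmp.image (continuous_inv.mul continuous_const)
        haveI : Nonempty c := hcne.to_subtype
        have key : (⋂ K : c, ((K : Subgroup G) : Set G) ∩
            ((fun h => h⁻¹ * g) '' (H : Set G))).Nonempty := by
          apply IsCompact.nonempty_iInter_of_directed_nonempty_isCompact_isClosed
          · intro K₁ K₂
            rcases hchain.total K₁.2 K₂.2 with h12 | h21
            · exact ⟨K₁, subset_rfl, Set.inter_subset_inter_left _ h12⟩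
            · exact ⟨K₂, Set.inter_subset_inter_left _ h21, subset_rfl⟩
          · rintro ⟨K, hK⟩
            have : g ∈ (H : Set G) * (K : Set G) := by rw [(hcS hK).2]; trivial
            obtain ⟨h, hh, k, hk, rfl⟩ := this
            exact ⟨k, hk, ⟨h, hh, by group⟩⟩
          · rintro ⟨K, hK⟩
            exact (((hcS hK).1).inter (hScmp.isClosed)).isCompact
          · rintro ⟨K, hK⟩
            exact ((hcS hK).1).inter (hScmp.isClosed)
        obtain ⟨k, hk⟩ := key
        simp only [Set.mem_iInter, Set.mem_inter_iff] at hk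
        have hkInf : k ∈ sInf c := by
          rw [Subgroup.mem_sInf]
          intro K hK
          exact (hk ⟨K, hK⟩).1
        obtain ⟨h, hh, hhk⟩ := (hk ⟨y, hy⟩).2
        refine ⟨h, hh, k, hkInf, ?_⟩
        have : h⁻¹ * g = k := hhk
        rw [← this]
        group
    obtain ⟨K, hKS, hKmin⟩ := hZorn
    refine ⟨K, hKS.1, hKS.2, ?_⟩
    -- show the intersection is trivial, using minimality
    rw [eq_bot_iff]
    rintro x ⟨hxH, hxK⟩
    rw [Subgroup.mem_bot]
    by_contra hx1
    obtain ⟨N, hNorm, hNopen, hxN⟩ := exists_openNormal_not_mem hx1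
    haveI := hNorm
    let π : G →* G ⧸ N := QuotientGroup.mk' N
    obtain ⟨L, hLmul, hLint⟩ := hfin N hNopen (Subgroup.zpowers (π x))
    -- K' = K ⊓ π⁻¹(L) is a smaller member of S
    have hNleL : N ≤ L.comap π := by
      intro n hn
      have : π n = 1 := (QuotientGroup.eq_one_iff n).2 hn
      simp only [Subgroup.mem_comap, this, one_mem]
    have hLopen : IsOpen ((L.comap π : Subgroup G) : Set G) := Subgroup.isOpen_mono hNleL hNopen
    have hK'S : K ⊓ L.comap π ∈ S := by
      constructor
      · exact hKS.1.inter ((L.comap π).isClosed_of_isOpen hLopen)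
      · ext g
        simp only [Set.mem_univ, iff_true]
        have : g ∈ (H : Set G) * (K : Set G) := by rw [hKS.2]; trivial
        obtain ⟨h, hh, k, hk, rfl⟩ := this
        have hπk : π k ∈ ((Subgroup.zpowers (π x) : Subgroup (G ⧸ N)) : Set (G ⧸ N)) *
            (L : Set (G ⧸ N)) := by rw [hLmul]; trivial
        obtain ⟨a, ha, l, hl, hal⟩ := hπk
        obtain ⟨m, rfl⟩ := ha
        have hπxm : π (x ^ m) = (π x) ^ m := map_zpow π x m
        have hmem : x ^ (-m) * k ∈ K ⊓ L.comap π := by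
          constructor
          · exact K.mul_mem (K.zpow_mem hxK (-m)) hk
          · have : π (x ^ (-m) * k) = l := by
              have : (π x) ^ m * l = π k := hal
              calc π (x ^ (-m) * k) = (π x) ^ (-m) * π k := by
                    rw [map_mul, map_zpow]
                _ = (π x) ^ (-m) * ((π x) ^ m * l) := by rw [this]
                _ = l := by group
            exact Subgroup.mem_comap.2 (this ▸ hl)
        refine ⟨h * x ^ m, H.mul_mem hh (H.zpow_mem hxH m), x ^ (-m) * k, hmem, by group⟩
    have hle : K ⊓ L.comap π ≤ K := inf_le_left
    have : K ≤ K ⊓ L.comap π := hKmin _ hK'S hle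
    have hxK' : x ∈ K ⊓ L.comap π := this hxK
    have hπxL : π x ∈ L := hxK'.2
    have hπxZ : π x ∈ Subgroup.zpowers (π x) := Subgroup.mem_zpowers (π x)
    have : π x ∈ Subgroup.zpowers (π x) ⊓ L := ⟨hπxZ, hπxL⟩
    rw [hLint, Subgroup.mem_bot] at this
    exact hxN ((QuotientGroup.eq_one_iff x).1 this)
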